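/- (Local existence, from the proof of Theorem 2.1.) Let Ψ : C([a,b],E) → C([a,b],E) be a locally contracting Volterra operator with constant q < 1. Then there exists γ ∈ (0, b−a] and a local solution of the equation y = Ψy on [a,a+γ]. -/

import Mathlib

open Set Filter Topology

noncomputable section

variable {E : Type*} [NormedAddCommGroup E] [NormedSpace ℝ E] [CompleteSpace E]

/-- The partial sup-norm `‖y‖_ξ = sup_{t ∈ [a, a+ξ]} ‖y t‖` on `C([a,b], E)`. -/
def partNorm (a b ξ : ℝ) (y : C(Set.Icc a b, E)) : ℝ :=
  sSup ((fun t : Set.Icc a b => ‖y t‖) '' {t : Set.Icc a b | (t : ℝ) ≤ a + ξ})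

/-- `y₁` and `y₂` agree on `[a, a+ξ]`. -/
def eqUpTo (a b ξ : ℝ) (y₁ y₂ : C(Set.Icc a b, E)) : Prop :=
  ∀ t : Set.Icc a b, (t : ℝ) ≤ a + ξ → y₁ t = y₂ t

/-- A Volterra operator on `C([a,b], E)` (in the sense of Tikhonov). -/
def IsVolterra (a b : ℝ) (Ψ : C(Set.Icc a b, E) → C(Set.Icc a b, E)) : Prop :=
  ∀ ξ ∈ Set.Ioo (0:ℝ) (b - a), ∀ y₁ y₂ : C(Set.Icc a b, E),
    eqUpTo a b ξ y₁ y₂ → eqUpTo a b ξ (Ψ y₁) (Ψ y₂)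

/-- A locally contracting operator with contraction constant `q`. -/
def IsLocallyContracting (a b q : ℝ) (Ψ : C(Set.Icc a b, E) → C(Set.Icc a b, E)) : Prop :=
  ∀ r > (0:ℝ), ∃ δ > (0:ℝ), ∀ y₁ y₂ : C(Set.Icc a b, E),
    partNorm a b (b - a) y₁ ≤ r → partNorm a b (b - a) y₂ ≤ r →
      (partNorm a b δ (Ψ y₁ - Ψ y₂) ≤ q * partNorm a b δ (y₁ - y₂)) ∧
      (∀ γ ∈ Set.Ioc (0:ℝ) (b - a - δ), eqUpTo a b γ y₁ y₂ →
        partNorm a b (γ + δ) (Ψ y₁ - Ψ y₂) ≤ q * partNorm a b (γ + δ) (y₁ - y₂))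

/-- A local solution of `y = Ψ y` on `[a, a+γ]`: a function continuous on `[a, a+γ]`
admitting a continuous extension `y ∈ C([a,b], E)` with `(Ψ y) t = g t` on `[a, a+γ]`. -/
def IsLocalSolution (a b γ : ℝ) (Ψ : C(Set.Icc a b, E) → C(Set.Icc a b, E))
    (g : ℝ → E) : Prop :=
  0 < γ ∧ γ ≤ b - a ∧ ContinuousOn g (Set.Icc a (a + γ)) ∧
  ∃ y : C(Set.Icc a b, E),
    (∀ t : Set.Icc a b, (t : ℝ) ≤ a + γ → y t = g t) ∧
    (∀ t : Set.Icc a b, (t : ℝ) ≤ a + γ → Ψ y t = g t)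

/-- A maximally extended solution of `y = Ψ y` on `[a, a+ζ)`. -/
def IsMaxExtSolution (a b ζ : ℝ) (Ψ : C(Set.Icc a b, E) → C(Set.Icc a b, E))
    (g : ℝ → E) : Prop :=
  0 < ζ ∧ ζ ≤ b - a ∧ (∀ γ ∈ Set.Ioo (0:ℝ) ζ, IsLocalSolution a b γ Ψ g) ∧
  Tendsto (fun γ => sSup ((fun t => ‖g t‖) '' Set.Icc a (a + γ))) (𝓝[<] ζ) atTop

/-- helper lemmas -/
lemma pn_le_norm (a b ξ : ℝ) (y : C(Set.Icc a b, E)) : partNorm a b ξ y ≤ ‖y‖ := by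
  apply Real.sSup_le
  · rintro x ⟨t, -, rfl⟩
    exact y.norm_coe_le_norm t
  · exact norm_nonneg y

lemma pn_nonneg (a b ξ : ℝ) (y : C(Set.Icc a b, E)) : 0 ≤ partNorm a b ξ y :=
  Real.sSup_nonneg (by rintro x ⟨t, -, rfl⟩; exact norm_nonneg _)

lemma norm_apply_le_pn (a b ξ : ℝ) (y : C(Set.Icc a b, E)) (t : Set.Icc a b)
    (ht : (t : ℝ) ≤ a + ξ) : ‖y t‖ ≤ partNorm a b ξ y := by
  apply le_csSup
  · exact ⟨‖y‖, by rintro x ⟨s, -, rfl⟩; exact y.norm_coe_le_norm s⟩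
  · exact ⟨t, ht, rfl⟩

/-- the stopping map `t ↦ min t (a+δ)` on `Icc a b`. -/
def prMap (a b δ : ℝ) (hδ : 0 ≤ δ) : C(Set.Icc a b, Set.Icc a b) where
  toFun t := ⟨min (t : ℝ) (a + δ),
    ⟨le_min t.2.1 (by linarith [t.2.1]), min_le_of_left_le t.2.2⟩⟩
  continuous_toFun := Continuous.subtype_mk (continuous_subtype_val.min continuous_const) _

theorem exists_local_solution
    (a b q : ℝ) (hab : a < b) (hq : q < 1)
    (Ψ : C(Set.Icc a b, E) → C(Set.Icc a b, E))
    (hVol : IsVolterra a b Ψ) (hLC : IsLocallyContracting a b q Ψ) :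
    ∃ γ ∈ Set.Ioc (0:ℝ) (b - a), ∃ g : ℝ → E, IsLocalSolution a b γ Ψ g := by
  set q' : ℝ := max q 0 with hq'def
  have hq'0 : 0 ≤ q' := le_max_right q 0
  have hq'1 : q' < 1 := max_lt hq one_pos
  have h1q : 0 < 1 - q' := by linarith
  set r : ℝ := (‖Ψ 0‖ + 1) / (1 - q') with hrdef
  have hrkey : (1 - q') * r = ‖Ψ 0‖ + 1 := by
    rw [hrdef, mul_div_cancel₀ _ (ne_of_gt h1q)]
  have hrpos : 0 < r := by
    rw [hrdef]; positivity
  obtain ⟨δ, hδpos, hδ⟩ := hLC r hrpos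
  set δ' : ℝ := min δ (b - a) with hδ'def
  have hδ'pos : 0 < δ' := lt_min hδpos (by linarith)
  have hδ'le : δ' ≤ b - a := min_le_right _ _
  -- the two partial norms agree
  have hset : ∀ t : Set.Icc a b, ((t : ℝ) ≤ a + δ ↔ (t : ℝ) ≤ a + δ') := by
    intro t
    constructor
    · intro h
      rcases le_total δ (b - a) with h' | h'
      · rw [hδ'def, min_eq_left h']; exact h
      · rw [hδ'def, min_eq_right h']; linarith [t.2.2]
    · intro h
      have h2 : δ' ≤ δ := min_le_left δ (b - a)
      linarith
  have hsets : {t : Set.Icc a b | (t : ℝ) ≤ a + δ} = {t : Set.Icc a b | (t : ℝ) ≤ a + δ'} :=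
    Set.ext fun t => hset t
  have hpn_eq : ∀ z : C(Set.Icc a b, E), partNorm a b δ z = partNorm a b δ' z := by
    intro z
    unfold partNorm
    rw [hsets]
  set P : C(Set.Icc a b, Set.Icc a b) := prMap a b δ' hδ'pos.le with hPdef
  have hPcoe : ∀ t : Set.Icc a b, (P t : ℝ) = min (t : ℝ) (a + δ') := fun t => rfl
  have hPle : ∀ t : Set.Icc a b, (P t : ℝ) ≤ a + δ' := fun t => min_le_right _ _
  have hPid : ∀ t : Set.Icc a b, (t : ℝ) ≤ a + δ' → P t = t := by
    intro t ht; exact Subtype.ext (min_eq_left ht)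
  -- the truncated operator
  set T : C(Set.Icc a b, E) → C(Set.Icc a b, E) := fun z => ((Ψ (z.comp P)).comp P) with hTdef
  have hcomp_norm : ∀ z : C(Set.Icc a b, E), ‖z.comp P‖ ≤ partNorm a b δ' z := by
    intro z
    refine (ContinuousMap.norm_le _ (pn_nonneg a b δ' z)).mpr fun t => ?_
    exact norm_apply_le_pn a b δ' z (P t) (hPle t)
  have hcomp_norm' : ∀ z : C(Set.Icc a b, E), ‖z.comp P‖ ≤ ‖z‖ := fun z =>
    le_trans (hcomp_norm z) (pn_le_norm a b δ' z)
  have hcomp_sub : ∀ z₁ z₂ : C(Set.Icc a b, E),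
      z₁.comp P - z₂.comp P = (z₁ - z₂).comp P := by
    intro z₁ z₂; ext t; simp
  -- contraction estimate
  have hcontr : ∀ z₁ z₂ : C(Set.Icc a b, E), ‖z₁‖ ≤ r → ‖z₂‖ ≤ r →
      ‖T z₁ - T z₂‖ ≤ q' * ‖z₁ - z₂‖ := by
    intro z₁ z₂ h₁ h₂
    have hb₁ : partNorm a b (b - a) (z₁.comp P) ≤ r :=
      le_trans (pn_le_norm _ _ _ _) (le_trans (hcomp_norm' z₁) h₁)
    have hb₂ : partNorm a b (b - a) (z₂.comp P) ≤ r :=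
      le_trans (pn_le_norm _ _ _ _) (le_trans (hcomp_norm' z₂) h₂)
    have hq1 := (hδ (z₁.comp P) (z₂.comp P) hb₁ hb₂).1
    calc ‖T z₁ - T z₂‖ = ‖(Ψ (z₁.comp P) - Ψ (z₂.comp P)).comp P‖ := by
          rw [hTdef]; rw [hcomp_sub]
      _ ≤ partNorm a b δ' (Ψ (z₁.comp P) - Ψ (z₂.comp P)) := hcomp_norm _
      _ = partNorm a b δ (Ψ (z₁.comp P) - Ψ (z₂.comp P)) := (hpn_eq _).symm
      _ ≤ q * partNorm a b δ (z₁.comp P - z₂.comp P) := hq1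
      _ ≤ q' * partNorm a b δ (z₁.comp P - z₂.comp P) :=
          mul_le_mul_of_nonneg_right (le_max_left q 0) (pn_nonneg _ _ _ _)
      _ ≤ q' * ‖z₁.comp P - z₂.comp P‖ :=
          mul_le_mul_of_nonneg_left (pn_le_norm _ _ _ _) hq'0
      _ = q' * ‖(z₁ - z₂).comp P‖ := by rw [hcomp_sub]
      _ ≤ q' * ‖z₁ - z₂‖ := mul_le_mul_of_nonneg_left (hcomp_norm' _) hq'0
  -- invariance of the ball
  have hzero : (0 : C(Set.Icc a b, E)).comp P = 0 := by ext t; rfl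
  have hT0 : T 0 = (Ψ 0).comp P := by
    show (Ψ ((0 : C(Set.Icc a b, E)).comp P)).comp P = (Ψ 0).comp P
    rw [hzero]
  have hinv : ∀ z : C(Set.Icc a b, E), ‖z‖ ≤ r → ‖T z‖ ≤ r := by
    intro z hz
    have h0r : ‖(0 : C(Set.Icc a b, E))‖ ≤ r := by simp [hrpos.le]
    have h1 : ‖T z - T 0‖ ≤ q' * ‖z - 0‖ := hcontr z 0 hz h0r
    have h2 : ‖T 0‖ ≤ ‖Ψ 0‖ := by rw [hT0]; exact hcomp_norm' _
    have h3 : ‖T z‖ ≤ ‖T z - T 0‖ + ‖T 0‖ := by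
      calc ‖T z‖ = ‖(T z - T 0) + T 0‖ := by rw [sub_add_cancel]
        _ ≤ ‖T z - T 0‖ + ‖T 0‖ := norm_add_le _ _
    rw [sub_zero] at h1
    have : q' * ‖z‖ ≤ q' * r := mul_le_mul_of_nonneg_left hz hq'0
    nlinarith [norm_nonneg (Ψ (0 : C(Set.Icc a b, E)))]
  -- Banach fixed point on the closed ball
  have hclosed : IsClosed {y : C(Set.Icc a b, E) | ‖y‖ ≤ r} :=
    isClosed_le continuous_norm continuous_const
  haveI : CompleteSpace {y : C(Set.Icc a b, E) // ‖y‖ ≤ r} := hclosed.completeSpace_coe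
  haveI : Nonempty {y : C(Set.Icc a b, E) // ‖y‖ ≤ r} := ⟨⟨0, by simp [hrpos.le]⟩⟩
  set F : {y : C(Set.Icc a b, E) // ‖y‖ ≤ r} → {y : C(Set.Icc a b, E) // ‖y‖ ≤ r} :=
    fun z => ⟨T z.1, hinv z.1 z.2⟩ with hFdef
  have hF : ContractingWith ⟨q', hq'0⟩ F := by
    constructor
    · exact_mod_cast hq'1
    · refine LipschitzWith.of_dist_le_mul fun z₁ z₂ => ?_
      have := hcontr z₁.1 z₂.1 z₁.2 z₂.2
      simp only [Subtype.dist_eq, dist_eq_norm]; exact this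
  set yS := hF.fixedPoint F with hySdef
  have hfix : F yS = yS := hF.fixedPoint_isFixedPt
  set y : C(Set.Icc a b, E) := yS.1 with hydef
  have hfixC : T y = y := congrArg Subtype.val hfix
  -- assemble the solution
  refine ⟨δ', ⟨hδ'pos, hδ'le⟩, fun s => (y.comp P) (projIcc a b hab.le s), hδ'pos, hδ'le, ?_, ?_⟩
  · exact ((y.comp P).continuous.comp continuous_projIcc).continuousOn
  · refine ⟨y.comp P, fun t ht => ?_, fun t ht => ?_⟩
    · show (y.comp P) t = (y.comp P) (projIcc a b hab.le ↑t)
      rw [projIcc_val]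
    · have h1 : Ψ (y.comp P) t = Ψ (y.comp P) (P t) := by rw [hPid t ht]
      have h2 : Ψ (y.comp P) (P t) = ((Ψ (y.comp P)).comp P) t := rfl
      have h3 : ((Ψ (y.comp P)).comp P) t = y t := ContinuousMap.congr_fun hfixC t
      show Ψ (y.comp P) t = (y.comp P) (projIcc a b hab.le ↑t)
      rw [h1, h2, h3, projIcc_val, ContinuousMap.comp_apply, hPid t ht]
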